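/- Let λ₁ ∈ ℂ \ {0} and f, g ∈ ℂ with Δ := conj(λ₁)|f|² + λ₁|g|² ≠ 0. Define a = d = −conj(Δ)/Δ, b = −(λ₁² − conj(λ₁)²) f conj(g)/Δ, c = (λ₁² − conj(λ₁)²) conj(f) g/Δ, and let T(λ) be the 2×2 matrix with entries T(λ)₁₁ = λ + a|λ₁|²/λ, T(λ)₁₂ = b, T(λ)₂₁ = c, T(λ)₂₂ = dλ + |λ₁|²/λ. Then for every λ ∈ ℂ with λ ∉ {0, λ₁, −λ₁, conj(λ₁), −conj(λ₁)}, one has T(λ) = [(λ² − λ₁²)(λ² − conj(λ₁)²)/(2λΔ)] · T̂(λ), where T̂(λ) := (λ − λ₁)⁻¹ (conj(g), conj(f))ᵀ (g, −f) + (λ + λ₁)⁻¹ (−conj(g), conj(f))ᵀ (g, f) + (λ − conj(λ₁))⁻¹ (f, −g)ᵀ (conj(f), conj(g)) + (λ + conj(λ₁))⁻¹ (f, g)ᵀ (−conj(f), conj(g)); here (u, v)ᵀ (w, z) denotes the rank-one 2×2 matrix with entries uw, uz, vw, vz. -/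

import Mathlib

open Complex ComplexConjugate

noncomputable section

/-- The one-fold Darboux matrix with parameter `lam1` and coefficients `a, b, c, d`. -/
def darbouxT (lam1 a b c d : ℂ) (lam : ℂ) : Matrix (Fin 2) (Fin 2) ℂ :=
  !![lam + a * (Complex.normSq lam1 : ℂ) / lam, b;
     c, d * lam + (Complex.normSq lam1 : ℂ) / lam]

set_option maxHeartbeats 1000000 in
private lemma quadKey (p q D x u1 u2 u3 u4 A : ℂ) (hx : x ≠ 0) (hD : D ≠ 0)
    (e1 : x - p ≠ 0) (e2 : x + p ≠ 0) (e3 : x - q ≠ 0) (e4 : x + q ≠ 0)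
    (h : A * (2 * x * D) = (x + p) * (x ^ 2 - q ^ 2) * u1 + (x - p) * (x ^ 2 - q ^ 2) * u2
      + (x ^ 2 - p ^ 2) * (x + q) * u3 + (x ^ 2 - p ^ 2) * (x - q) * u4) :
    A = (x ^ 2 - p ^ 2) * (x ^ 2 - q ^ 2) / (2 * x * D) *
      ((x - p)⁻¹ * u1 + (x + p)⁻¹ * u2 + (x - q)⁻¹ * u3 + (x + q)⁻¹ * u4) := by
  have hsum : (x - p)⁻¹ * u1 + (x + p)⁻¹ * u2 + (x - q)⁻¹ * u3 + (x + q)⁻¹ * u4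
      = ((x + p) * (x ^ 2 - q ^ 2) * u1 + (x - p) * (x ^ 2 - q ^ 2) * u2
        + (x ^ 2 - p ^ 2) * (x + q) * u3 + (x ^ 2 - p ^ 2) * (x - q) * u4)
        / ((x - p) * (x + p) * (x - q) * (x + q)) := by
    field_simp
    ring
  rw [hsum, div_mul_div_comm, mul_comm (2 * x * D), eq_div_iff (by simp [mul_ne_zero_iff, e1, e2, e3, e4, hx, hD, two_ne_zero])]
  linear_combination ((x - p) * (x + p) * (x - q) * (x + q)) * h

set_option maxHeartbeats 1000000 in
/-- Factorized rank-one representation of the Darboux matrix. -/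
theorem darboux_rank_one_representation
    (lam1 : ℂ) (hlam1 : lam1 ≠ 0) (f g : ℂ)
    (Δ : ℂ) (hΔdef : Δ = conj lam1 * (Complex.normSq f : ℂ) + lam1 * (Complex.normSq g : ℂ))
    (hΔ : Δ ≠ 0)
    (a b c d : ℂ)
    (ha : a = -(conj Δ) / Δ)
    (hb : b = -((lam1 ^ 2 - (conj lam1) ^ 2) * f * conj g) / Δ)
    (hc : c = (lam1 ^ 2 - (conj lam1) ^ 2) * conj f * g / Δ)
    (hd : d = -(conj Δ) / Δ)
    (lam : ℂ) (h0 : lam ≠ 0) (h1 : lam ≠ lam1) (h2 : lam ≠ -lam1)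
    (h3 : lam ≠ conj lam1) (h4 : lam ≠ -(conj lam1)) :
    darbouxT lam1 a b c d lam =
      ((lam ^ 2 - lam1 ^ 2) * (lam ^ 2 - (conj lam1) ^ 2) / (2 * lam * Δ)) •
        ((lam - lam1)⁻¹ • Matrix.vecMulVec ![conj g, conj f] ![g, -f]
          + (lam + lam1)⁻¹ • Matrix.vecMulVec ![-(conj g), conj f] ![g, f]
          + (lam - conj lam1)⁻¹ • Matrix.vecMulVec ![f, -g] ![conj f, conj g]
          + (lam + conj lam1)⁻¹ • Matrix.vecMulVec ![f, g] ![-(conj f), conj g]) := by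
  have e1 : lam - lam1 ≠ 0 := sub_ne_zero.mpr h1
  have e2 : lam + lam1 ≠ 0 := fun h => h2 (by linear_combination h)
  have e3 : lam - conj lam1 ≠ 0 := sub_ne_zero.mpr h3
  have e4 : lam + conj lam1 ≠ 0 := fun h => h4 (by linear_combination h)
  have hnl : (Complex.normSq lam1 : ℂ) = lam1 * conj lam1 := (Complex.mul_conj lam1).symm
  have hnf : (Complex.normSq f : ℂ) = f * conj f := (Complex.mul_conj f).symm
  have hng : (Complex.normSq g : ℂ) = g * conj g := (Complex.mul_conj g).symm
  rw [hnf, hng] at hΔdef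
  subst ha hb hc hd hΔdef
  ext i j
  fin_cases i <;> fin_cases j <;>
    · simp only [darbouxT, Matrix.vecMulVec_apply, Matrix.smul_apply, Matrix.add_apply,
        Matrix.cons_val', Matrix.cons_val_zero, Matrix.cons_val_one, Matrix.head_cons,
        Matrix.head_fin_const, Matrix.empty_val', Matrix.cons_val_fin_one, Matrix.of_apply,
        smul_eq_mul, hnl, Fin.zero_eta, Fin.mk_one]
      refine quadKey _ _ _ _ _ _ _ _ _ h0 hΔ e1 e2 e3 e4 ?_
      simp -failIfUnchanged only [map_add, map_mul, Complex.conj_conj]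
      have hΔ' : conj f * f * conj lam1 + lam1 * conj g * g ≠ 0 := fun h => hΔ (by linear_combination h)
      have hΔ'' : lam1 * conj g * g + conj lam1 * f * conj f ≠ 0 := fun h => hΔ (by linear_combination h)
      have hΔ''' : lam1 * g * conj g + conj lam1 * conj f * f ≠ 0 := fun h => hΔ (by linear_combination h)
      have hΔ4 : conj lam1 * f * conj f + lam1 * conj g * g ≠ 0 := fun h => hΔ (by linear_combination h)
      have hΔ5 : conj lam1 * conj f * f + lam1 * g * conj g ≠ 0 := fun h => hΔ (by linear_combination h)
      field_simp
      ring
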